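/- For any p > 1 and 0 < |c| < λ there exist constants K > 0 and ε₀ > 0 such that for all 0 < ε < ε₀ and every solution (u,v) of the system, the function H_ε(t) = E(t) − ε v v' + pε u u' + ((p+1)λε/(2c))(u'v − uv') satisfies dH_ε/dt ≤ −δ(u² + v² + u'² + v'²) for some δ > 0 depending only on λ, c, p, ε, where E = (1/2)(u'² + v'² + λ(u² + v²)) + cuv. -/

import Mathlib

private lemma young (η s t : ℝ) (hη : 0 < η) : s*t ≤ (η/2)*s^2 + (1/(2*η))*t^2 := by
  rw [← sub_nonneg]
  have h : (η/2)*s^2 + (1/(2*η))*t^2 - s*t = (η*s - t)^2/(2*η) := by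
    field_simp; ring
  rw [h]; positivity

private lemma absmul_le (x y η : ℝ) (hη : 0 < η) : |x*y| ≤ (η/2)*x^2 + (1/(2*η))*y^2 := by
  rw [abs_mul, ← sq_abs x, ← sq_abs y]
  exact young η |x| |y| hη

private lemma cross_bound (e A η x y : ℝ) (hη : 0 < η) (hA : 0 ≤ A) (he : e ≤ A * |x*y|) :
    e ≤ (A*η/2)*x^2 + (A/(2*η))*y^2 := by
  have h2 := mul_le_mul_of_nonneg_left (absmul_le x y η hη) hA
  calc e ≤ A*|x*y| := he
    _ ≤ A*((η/2)*x^2 + (1/(2*η))*y^2) := h2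
    _ = (A*η/2)*x^2 + (A/(2*η))*y^2 := by ring

set_option maxHeartbeats 1600000 in
private lemma key (lam c p ε δ m L U V U' V' U2 V2 : ℝ)
    (hlam : 0 < lam) (hc : c ≠ 0) (hp : 1 < p) (hε : 0 < ε)
    (hm : m = (p-1)*(lam - |c|)/2) (hm0 : 0 < m)
    (hL : L = (p+1)*lam/(2*|c|)) (hL0 : 0 < L)
    (hεC : ε*p + ε*p^2/(2*m) + ε*L^2/(2*m) ≤ 1/2)
    (hδ1 : δ ≤ ε*m/2) (hδ2 : δ ≤ ε) (hδ3 : δ ≤ 1/2)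
    (hU2 : U2 + U' + lam*U + c*V = 0) (hV2 : V2 + lam*V + c*U = 0) :
    U'*U2 + V'*V2 + lam*(U*U' + V*V') + c*(U'*V + U*V')
      - ε*(V'^2 + V*V2) + p*ε*(U'^2 + U*U2)
      + ((p+1)*lam*ε/(2*c))*(U2*V - U*V2)
    ≤ -δ * (U^2 + V^2 + U'^2 + V'^2) := by
  have hU2' : U2 = -(U' + lam*U + c*V) := by linarith
  have hV2' : V2 = -(lam*V + c*U) := by linarith
  subst hU2' hV2'
  have hac : 0 < |c| := abs_pos.mpr hc
  have hp0 : 0 < p := by linarith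
  have hP : U'*(-(U' + lam*U + c*V)) + V'*(-(lam*V + c*U)) + lam*(U*U' + V*V') + c*(U'*V + U*V')
      - ε*(V'^2 + V*(-(lam*V + c*U))) + p*ε*(U'^2 + U*(-(U' + lam*U + c*V)))
      + ((p+1)*lam*ε/(2*c))*((-(U' + lam*U + c*V))*V - U*(-(lam*V + c*U)))
      = (p*ε-1)*U'^2 - ε*V'^2 - (lam*ε*(p-1)/2)*U^2 - (lam*ε*(p-1)/2)*V^2
        + (ε*c*(1-p))*(U*V) + (-(p*ε))*(U*U') + (-((p+1)*lam*ε/(2*c)))*(V*U') := by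
    have hK : ((p+1)*lam*ε/(2*c))*c = (p+1)*lam*ε/2 := by field_simp
    linear_combination (U^2 - V^2) * hK
  rw [hP]
  -- bounds on cross terms
  have hB1 : (ε*c*(1-p))*(U*V) ≤ ((ε*(p-1)*|c|)*1/2)*U^2 + ((ε*(p-1)*|c|)/(2*1))*V^2 := by
    apply cross_bound _ _ _ _ _ one_pos (mul_nonneg (mul_nonneg hε.le (by linarith : (0:ℝ) ≤ p-1)) (abs_nonneg c))
    have h2 : |(ε*c*(1-p))*(U*V)| = (ε*(p-1)*|c|) * |U*V| := by
      rw [abs_mul, abs_mul, abs_mul, abs_of_pos hε,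
        abs_of_neg (show (1:ℝ)-p < 0 by linarith)]
      ring
    calc (ε*c*(1-p))*(U*V) ≤ |(ε*c*(1-p))*(U*V)| := le_abs_self _
      _ = (ε*(p-1)*|c|) * |U*V| := h2
  have hB2 : (-(p*ε))*(U*U') ≤ ((p*ε)*(m/p)/2)*U^2 + ((p*ε)/(2*(m/p)))*U'^2 := by
    apply cross_bound _ _ _ _ _ (by positivity) (by positivity)
    have h0 : (-(p*ε))*(U*U') = (p*ε)*(-(U*U')) := by ring
    rw [h0]
    exact mul_le_mul_of_nonneg_left (neg_le_abs _) (by positivity)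
  have hB3 : (-((p+1)*lam*ε/(2*c)))*(V*U') ≤ ((L*ε)*(m/L)/2)*V^2 + ((L*ε)/(2*(m/L)))*U'^2 := by
    apply cross_bound _ _ _ _ _ (by positivity) (by positivity)
    have h2 : |(-((p+1)*lam*ε/(2*c)))*(V*U')| = (L*ε) * |V*U'| := by
      rw [abs_mul, abs_neg, abs_div, abs_mul, abs_mul, abs_mul,
        abs_of_pos (show (0:ℝ) < p+1 by linarith), abs_of_pos hlam, abs_of_pos hε,
        abs_of_pos (show (0:ℝ) < 2 by norm_num), hL]
      ring
    calc (-((p+1)*lam*ε/(2*c)))*(V*U') ≤ |(-((p+1)*lam*ε/(2*c)))*(V*U')| := le_abs_self _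
      _ = (L*ε) * |V*U'| := h2
  -- coefficient simplifications
  have e2 : (p*ε)*(m/p)/2 = ε*m/2 := by field_simp
  have e2' : (p*ε)/(2*(m/p)) = ε*p^2/(2*m) := by
    field_simp
  have e3 : (L*ε)*(m/L)/2 = ε*m/2 := by field_simp
  have e3' : (L*ε)/(2*(m/L)) = ε*L^2/(2*m) := by
    field_simp
  rw [e2, e2'] at hB2
  rw [e3, e3'] at hB3
  have hmval : lam*ε*(p-1)/2 - ε*(p-1)*|c|/2 = ε*m := by rw [hm]; ring
  have hcoU : (ε*(p-1)*|c|)*1/2 + ε*m/2 - lam*ε*(p-1)/2 ≤ -δ := by linarith [hmval, hδ1]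
  have hcoV : (ε*(p-1)*|c|)/(2*1) + ε*m/2 - lam*ε*(p-1)/2 ≤ -δ := by linarith [hmval, hδ1]
  have hcoU' : (p*ε-1) + ε*p^2/(2*m) + ε*L^2/(2*m) ≤ -δ := by linarith [hεC, hδ3]
  have fU : ((ε*(p-1)*|c|)*1/2)*U^2 + (ε*m/2)*U^2 - (lam*ε*(p-1)/2)*U^2 ≤ -δ*U^2 := by
    have := mul_le_mul_of_nonneg_right hcoU (sq_nonneg U); linarith [this]
  have fV : ((ε*(p-1)*|c|)/(2*1))*V^2 + (ε*m/2)*V^2 - (lam*ε*(p-1)/2)*V^2 ≤ -δ*V^2 := by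
    have := mul_le_mul_of_nonneg_right hcoV (sq_nonneg V); linarith [this]
  have fU' : (p*ε-1)*U'^2 + (ε*p^2/(2*m))*U'^2 + (ε*L^2/(2*m))*U'^2 ≤ -δ*U'^2 := by
    have := mul_le_mul_of_nonneg_right hcoU' (sq_nonneg U'); linarith [this]
  have fV' : -ε*V'^2 ≤ -δ*V'^2 := by
    have := mul_le_mul_of_nonneg_right hδ2 (sq_nonneg V'); linarith [this]
  linarith [hB1, hB2, hB3, fU, fV, fU', fV']


theorem stmt_5 (lam c p : ℝ) (hlam : 0 < lam) (hc : 0 < |c|) (hclam : |c| < lam)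
    (hp : 1 < p) :
    ∃ K ε₀ : ℝ, 0 < K ∧ 0 < ε₀ ∧
      ∀ ε : ℝ, 0 < ε → ε < ε₀ →
        ∃ δ : ℝ, 0 < δ ∧
          ∀ (u v u' v' u'' v'' : ℝ → ℝ),
            (∀ t, HasDerivAt u (u' t) t) → (∀ t, HasDerivAt u' (u'' t) t) →
            (∀ t, HasDerivAt v (v' t) t) → (∀ t, HasDerivAt v' (v'' t) t) →
            (∀ t, u'' t + u' t + lam * u t + c * v t = 0) →
            (∀ t, v'' t + lam * v t + c * u t = 0) →
            ∀ t, deriv (fun t =>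
                ((1/2) * ((u' t)^2 + (v' t)^2 + lam * ((u t)^2 + (v t)^2))
                  + c * u t * v t)
                - ε * (v t * v' t) + p * ε * (u t * u' t)
                + ((p + 1) * lam * ε / (2 * c)) * (u' t * v t - u t * v' t)) t
              ≤ -δ * ((u t)^2 + (v t)^2 + (u' t)^2 + (v' t)^2) := by
  have hc0 : c ≠ 0 := abs_pos.mp hc
  obtain ⟨m, hm⟩ : ∃ m : ℝ, m = (p-1)*(lam - |c|)/2 := ⟨_, rfl⟩
  obtain ⟨L, hL⟩ : ∃ L : ℝ, L = (p+1)*lam/(2*|c|) := ⟨_, rfl⟩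
  have hm0 : 0 < m := by
    have h1 : (0:ℝ) < p - 1 := by linarith
    have h2 : (0:ℝ) < lam - |c| := by linarith
    have := mul_pos h1 h2
    rw [hm]; linarith
  have hL0 : 0 < L := by
    rw [hL]
    have h1 : (0:ℝ) < (p+1)*lam := by nlinarith
    exact div_pos h1 (by positivity)
  obtain ⟨C, hCdef⟩ : ∃ C : ℝ, C = p + p^2/(2*m) + L^2/(2*m) := ⟨_, rfl⟩
  have hC0 : 0 < C := by
    have h1 : (0:ℝ) ≤ p^2/(2*m) := div_nonneg (sq_nonneg p) (by linarith)
    have h2 : (0:ℝ) ≤ L^2/(2*m) := div_nonneg (sq_nonneg L) (by linarith)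
    rw [hCdef]; nlinarith
  refine ⟨1, 1/(2*C), one_pos, one_div_pos.mpr (by linarith), ?_⟩
  intro ε hε hε₀
  refine ⟨min (min (ε*m/2) ε) (1/2), lt_min (lt_min (by positivity) hε) (by norm_num), ?_⟩
  intro u v u' v' u'' v'' hu hu' hv hv' hode1 hode2 t
  have hεC : ε*p + ε*p^2/(2*m) + ε*L^2/(2*m) ≤ 1/2 := by
    have h := (lt_div_iff₀ (by linarith : (0:ℝ) < 2*C)).mp hε₀
    have h2 : ε*(2*C) = 2*(ε*p + ε*p^2/(2*m) + ε*L^2/(2*m)) := by rw [hCdef]; ring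
    linarith
  have A := ((((hu' t).pow 2).add ((hv' t).pow 2)).add
      ((((hu t).pow 2).add ((hv t).pow 2)).const_mul lam)).const_mul (1/2 : ℝ)
  have B := ((hu t).const_mul c).mul (hv t)
  have Cd := ((hv t).mul (hv' t)).const_mul ε
  have D := ((hu t).mul (hu' t)).const_mul (p * ε)
  have E := (((hu' t).mul (hv t)).sub ((hu t).mul (hv' t))).const_mul
      ((p + 1) * lam * ε / (2 * c))
  have H : HasDerivAt (fun t =>
        ((1/2) * ((u' t)^2 + (v' t)^2 + lam * ((u t)^2 + (v t)^2))
          + c * u t * v t)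
        - ε * (v t * v' t) + p * ε * (u t * u' t)
        + ((p + 1) * lam * ε / (2 * c)) * (u' t * v t - u t * v' t))
      (u' t * u'' t + v' t * v'' t + lam * (u t * u' t + v t * v' t)
        + c * (u' t * v t + u t * v' t)
        - ε * (v' t * v' t + v t * v'' t) + p * ε * (u' t * u' t + u t * u'' t)
        + ((p + 1) * lam * ε / (2 * c)) * (u'' t * v t - u t * v'' t)) t := by
    have H0 := (((A.add B).sub Cd).add D).add E
    refine H0.congr_deriv ?_
    push_cast
    ring
  rw [H.deriv]
  have hkey := key lam c p ε (min (min (ε*m/2) ε) (1/2)) m L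
    (u t) (v t) (u' t) (v' t) (u'' t) (v'' t)
    hlam hc0 hp hε hm hm0 hL hL0 hεC
    ((min_le_left _ _).trans (min_le_left _ _))
    ((min_le_left _ _).trans (min_le_right _ _))
    (min_le_right _ _)
    (hode1 t) (hode2 t)
  linarith [hkey]
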